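/- Let G=(V,E) be an undirected unweighted graph, p* an s–t path in G with edge sequence e1,…,eℓ, and let Ĝ be the augmented line graph of G with respect to s and t, with target path p̂* = (ŝ, e1, …, eℓ, t̂). If V̂' ⊆ E∖{e1,…,eℓ} (viewed as a set of vertices of Ĝ) is a Force Path Remove solution for (Ĝ, p̂*), then V̂', viewed as an edge set E' ⊆ E, is a Force Path Cut solution for (G, p*). -/

import Mathlib

/-- `E'` is a Force Path Cut solution for the undirected graph `G` with unit edge
weights and target path `p`. -/
def FPCSol {V : Type*} (G : SimpleGraph V) {s t : V} (p : G.Walk s t)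
    (E' : Set (Sym2 V)) : Prop :=
  E' ⊆ G.edgeSet ∧ (∀ e ∈ p.edges, e ∉ E') ∧
    ∀ q : (G.deleteEdges E').Walk s t, q.IsPath →
      q.mapLe (SimpleGraph.deleteEdges_le E') ≠ p → p.length < q.length

/-- `V'` is a Force Path Remove solution for the unweighted graph `H` and target path
`p`: `V'` avoids the vertices of `p`, and in the subgraph induced on the complement of
`V'` (modelled by deleting every edge incident to a vertex of `V'`) the path `p` is
strictly shorter than every other path between its endpoints. -/
def FPRSol {X : Type*} (H : SimpleGraph X) {a b : X} (p : H.Walk a b)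
    (V' : Set X) : Prop :=
  (∀ v ∈ V', v ∉ p.support) ∧
    ∀ q : (H.deleteEdges {e : Sym2 X | ∃ v ∈ V', v ∈ e}).Walk a b, q.IsPath →
      q.mapLe (SimpleGraph.deleteEdges_le _) ≠ p → p.length < q.length

/-- The adjacency relation of the augmented line graph of `G` with respect to `s` and
`t`.  Its vertices are the edges of `G` (as elements of `Sym2 V`) together with two new
vertices `ŝ = Sum.inr false` and `t̂ = Sum.inr true`; two edges of `G` are adjacent iff
they are distinct and share an endpoint, `ŝ` is adjacent to exactly the edges incident
to `s`, and `t̂` to exactly the edges incident to `t`. -/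
def lgAdj {V : Type*} (G : SimpleGraph V) (s t : V) :
    (Sym2 V ⊕ Bool) → (Sym2 V ⊕ Bool) → Prop
  | Sum.inl e, Sum.inl f => e ∈ G.edgeSet ∧ f ∈ G.edgeSet ∧ e ≠ f ∧ ∃ v, v ∈ e ∧ v ∈ f
  | Sum.inl e, Sum.inr b => e ∈ G.edgeSet ∧ (if b then t else s) ∈ e
  | Sum.inr b, Sum.inl e => e ∈ G.edgeSet ∧ (if b then t else s) ∈ e
  | Sum.inr _, Sum.inr _ => False

/-- The augmented line graph of `G` with respect to `s` and `t`. -/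
def lineGraph {V : Type*} (G : SimpleGraph V) (s t : V) :
    SimpleGraph (Sym2 V ⊕ Bool) where
  Adj := lgAdj G s t
  symm := by
    constructor
    rintro (e | b) (f | b') h <;> simp only [lgAdj] at h ⊢ <;> tauto
  loopless := by
    constructor
    rintro (e | b) h <;> simp only [lgAdj] at h
    exact h.2.2.1 rfl

section AuxStmt14
open SimpleGraph

lemma auxLG {V : Type*} (G : SimpleGraph V) (s t : V)
    (Vhat' : Set (Sym2 V ⊕ Bool))
    (hVsub : ∀ x ∈ Vhat', ∃ e, x = Sum.inl e) :
    ∀ {x : V} (q : (G.deleteEdges {e : Sym2 V | Sum.inl e ∈ Vhat'}).Walk x t),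
      q.IsPath → ∀ e : Sym2 V, e ∈ G.edgeSet → x ∈ e → Sum.inl e ∉ Vhat' →
      e ∉ q.edges →
      ∃ w : ((lineGraph G s t).deleteEdges
          {ed : Sym2 (Sym2 V ⊕ Bool) | ∃ v ∈ Vhat', v ∈ ed}).Walk (Sum.inl e) (Sum.inr true),
        w.support = Sum.inl e :: q.edges.map Sum.inl ++ [Sum.inr true] := by
  intro x q
  induction q with
  | @nil u =>
    intro _ e he hte heV _
    have hadj : ((lineGraph G s u).deleteEdges
        {ed : Sym2 (Sym2 V ⊕ Bool) | ∃ v ∈ Vhat', v ∈ ed}).Adj (Sum.inl e) (Sum.inr true) := by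
      rw [deleteEdges_adj]
      constructor
      · show lgAdj G s u (Sum.inl e) (Sum.inr true)
        simp only [lgAdj, if_pos rfl]
        exact ⟨he, hte⟩
      · rintro ⟨v, hv, hve⟩
        rw [Sym2.mem_iff] at hve
        rcases hve with rfl | rfl
        · exact heV hv
        · obtain ⟨e', he'⟩ := hVsub _ hv; simp at he'
    exact ⟨SimpleGraph.Walk.cons hadj SimpleGraph.Walk.nil, by simp⟩
  | @cons x y u h q' ih =>
    intro hp e he hxe heV heq
    rw [deleteEdges_adj] at h
    have hfE : s(x, y) ∈ G.edgeSet := h.1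
    have hfV : Sum.inl s(x, y) ∉ Vhat' := h.2
    have hxs : x ∉ q'.support := by
      have := hp.support_nodup
      simp at this
      exact this.1
    have hfq : s(x, y) ∉ q'.edges := fun hmem => hxs (q'.fst_mem_support_of_mem_edges hmem)
    obtain ⟨w, hw⟩ := ih hp.of_cons s(x, y) hfE (Sym2.mem_mk_right x y) hfV hfq
    have hne : e ≠ s(x, y) := by
      rintro rfl; exact heq (by simp)
    have hadj : ((lineGraph G s u).deleteEdges
        {ed : Sym2 (Sym2 V ⊕ Bool) | ∃ v ∈ Vhat', v ∈ ed}).Adj (Sum.inl e) (Sum.inl s(x, y)) := by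
      rw [deleteEdges_adj]
      constructor
      · show lgAdj G s u (Sum.inl e) (Sum.inl s(x, y))
        exact ⟨he, hfE, by simpa using hne, x, hxe, Sym2.mem_mk_left x y⟩
      · rintro ⟨v, hv, hve⟩
        rw [Sym2.mem_iff] at hve
        rcases hve with rfl | rfl
        · exact heV hv
        · exact hfV hv
    refine ⟨SimpleGraph.Walk.cons hadj w, ?_⟩
    simp [hw]

lemma mapLe_support {V : Type*} {G G' : SimpleGraph V} (h : G ≤ G') {u v : V}
    (p : G.Walk u v) : (p.mapLe h).support = p.support := by
  simp only [SimpleGraph.Walk.mapLe, SimpleGraph.Walk.support_map]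
  have : ⇑(SimpleGraph.Hom.ofLE h) = id := rfl
  simp [this]

lemma mapLe_edges {V : Type*} {G G' : SimpleGraph V} (h : G ≤ G') {u v : V}
    (p : G.Walk u v) : (p.mapLe h).edges = p.edges := by
  simp only [SimpleGraph.Walk.mapLe, SimpleGraph.Walk.edges_map]
  have : ⇑(SimpleGraph.Hom.ofLE h) = id := rfl
  simp [this, Sym2.map_id']

end AuxStmt14

/-- If `V̂' ⊆ E ∖ {e1, …, eℓ}` (viewed as vertices of the augmented
line graph `Ĝ`) is a Force Path Remove solution for `(Ĝ, p̂*)`, where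
`p̂* = (ŝ, e1, …, eℓ, t̂)` corresponds to the edge sequence of `p*`, then `V̂'` viewed
as an edge set of `G` is a Force Path Cut solution for `(G, p*)`. -/
theorem stmt14 {V : Type*} (G : SimpleGraph V) (s t : V) (hst : s ≠ t)
    (pstar : G.Walk s t) (hpstar : pstar.IsPath)
    (phat : (lineGraph G s t).Walk (Sum.inr false) (Sum.inr true))
    (hphat : phat.support
        = Sum.inr false :: (pstar.edges.map Sum.inl ++ [Sum.inr true]))
    (Vhat' : Set (Sym2 V ⊕ Bool))
    (hsub : Vhat' ⊆ Sum.inl '' {e : Sym2 V | e ∈ G.edgeSet ∧ e ∉ pstar.edges})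
    (hsol : FPRSol (lineGraph G s t) phat Vhat') :
    FPCSol G pstar {e : Sym2 V | Sum.inl e ∈ Vhat'} := by
  have hVsub : ∀ x ∈ Vhat', ∃ e, x = Sum.inl e := by
    intro x hx; obtain ⟨e, _, rfl⟩ := hsub hx; exact ⟨e, rfl⟩
  refine ⟨?_, ?_, ?_⟩
  · intro e he
    obtain ⟨e', ⟨hE, _⟩, heq⟩ := hsub he
    cases Sum.inl.inj heq
    exact hE
  · intro e hep he
    obtain ⟨e', ⟨_, hne⟩, heq⟩ := hsub he
    cases Sum.inl.inj heq
    exact hne hep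
  · intro q hq hne
    cases q with
    | nil => exact absurd rfl hst
    | @cons _ y _ h q' =>
      rw [SimpleGraph.deleteEdges_adj] at h
      have hq' : q'.IsPath := hq.of_cons
      have hss : s ∉ q'.support := by
        have := hq.support_nodup
        simp at this
        exact this.1
      have hfq : s(s, y) ∉ q'.edges :=
        fun hmem => hss (q'.fst_mem_support_of_mem_edges hmem)
      obtain ⟨w, hw⟩ := auxLG G s t Vhat' hVsub q' hq' s(s, y) h.1
        (Sym2.mem_mk_right s y) h.2 hfq
      have hadj0 : ((lineGraph G s t).deleteEdges
          {ed : Sym2 (Sym2 V ⊕ Bool) | ∃ v ∈ Vhat', v ∈ ed}).Adj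
          (Sum.inr false) (Sum.inl s(s, y)) := by
        rw [SimpleGraph.deleteEdges_adj]
        constructor
        · show lgAdj G s t (Sum.inr false) (Sum.inl s(s, y))
          exact ⟨h.1, by simp⟩
        · rintro ⟨v, hv, hve⟩
          rw [Sym2.mem_iff] at hve
          rcases hve with rfl | rfl
          · obtain ⟨e', he'⟩ := hVsub _ hv; simp at he'
          · exact h.2 hv
      set what := SimpleGraph.Walk.cons hadj0 w with hwhat
      have hwsupp : what.support
          = Sum.inr false :: ((SimpleGraph.Walk.cons
              (by rw [SimpleGraph.deleteEdges_adj]; exact h) q').edges.map Sum.inl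
              ++ [Sum.inr true]) := by
        simp [hwhat, hw]
      have hwpath : what.IsPath := by
        rw [SimpleGraph.Walk.isPath_def, hwsupp]
        have hnd : (SimpleGraph.Walk.cons
            (by rw [SimpleGraph.deleteEdges_adj]; exact h) q' :
            (G.deleteEdges {e : Sym2 V | Sum.inl e ∈ Vhat'}).Walk s t).edges.Nodup :=
          hq.edges_nodup
        refine List.nodup_cons.mpr ⟨?_, ?_⟩
        · simp
        · rw [List.nodup_append]
          refine ⟨hnd.map (fun a b => Sum.inl.inj), List.nodup_singleton _, ?_⟩
          simp [List.disjoint_left]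
      have hwne : what.mapLe (SimpleGraph.deleteEdges_le _) ≠ phat := by
        intro heq
        apply hne
        apply SimpleGraph.Walk.edges_injective
        have hsupp : (what.mapLe (SimpleGraph.deleteEdges_le _)).support
            = phat.support := by rw [heq]
        rw [mapLe_support, hwsupp, hphat] at hsupp
        have hedges : (SimpleGraph.Walk.cons
            (by rw [SimpleGraph.deleteEdges_adj]; exact h) q' :
            (G.deleteEdges {e : Sym2 V | Sum.inl e ∈ Vhat'}).Walk s t).edges
            = pstar.edges := by
          have h1 := List.cons_injective.eq_iff.mp hsupp
          have h2 := (List.append_left_injective [Sum.inr true]).eq_iff.mp h1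
          exact List.map_injective_iff.mpr Sum.inl_injective h2
        rw [mapLe_edges, hedges]
      have hlt := hsol.2 what hwpath hwne
      have hl1 : phat.length + 1 = pstar.length + 2 := by
        have := phat.length_support
        rw [hphat] at this
        simp at this
        omega
      have hl2 : what.length + 1 = q'.length + 3 := by
        have := what.length_support
        rw [hwsupp] at this
        simp at this
        omega
      simp only [SimpleGraph.Walk.length_cons]
      omega
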